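/- For the operator G of a finite Markov decision process, (i) for all Q1, Q2 : S×A → ℝ and all y ∈ S×A×S one has p_span(G(Q1,y) − G(Q2,y)) ≤ 2·p_span(Q1 − Q2); and (ii) if |R(s,a)| ≤ 1 for all (s,a), then p_span(G(0,y)) ≤ 1/2 for all y ∈ S×A×S. -/

import Mathlib

/-- The span seminorm of a vector over a finite nonempty index set:
`p_span(x) = (max_i x_i - min_i x_i) / 2`. -/
noncomputable def pspan {I : Type*} [Fintype I] [Nonempty I] (x : I → ℝ) : ℝ :=
  ((⨆ i, x i) - ⨅ i, x i) / 2

/-- The (asynchronous) sample operator `G` of a finite MDP: for `y = (s0, a0, s1)`,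
`[G(Q,y)](s,a) = 1{(s0,a0)=(s,a)}·(R(s0,a0) + max_{a'} Q(s1,a') - Q(s0,a0)) + Q(s,a)`. -/
noncomputable def Gop {S A : Type*} [Nonempty A] [DecidableEq S] [DecidableEq A]
    (R : S × A → ℝ) (Q : S × A → ℝ) (y : S × A × S) : S × A → ℝ :=
  fun sa =>
    (if (y.1, y.2.1) = sa then
        R (y.1, y.2.1) + (⨆ a' : A, Q (y.2.2, a')) - Q (y.1, y.2.1)
      else 0) + Q sa

lemma pspan_le_bounds {I : Type*} [Fintype I] [Nonempty I] {x : I → ℝ} {m M : ℝ}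
    (h1 : ∀ i, m ≤ x i) (h2 : ∀ i, x i ≤ M) :
    pspan x ≤ (M - m) / 2 := by
  have hs : (⨆ i, x i) ≤ M := ciSup_le h2
  have hi : m ≤ ⨅ i, x i := le_ciInf h1
  unfold pspan
  linarith

/-- (i) `G(·,y)` is `2`-Lipschitz in the span seminorm; (ii) if `|R| ≤ 1` then
`p_span(G(0,y)) ≤ 1/2`. -/
theorem Gop_properties {S A : Type*} [Fintype S] [Fintype A] [Nonempty S] [Nonempty A]
    [DecidableEq S] [DecidableEq A] (R : S × A → ℝ) :
    (∀ (Q1 Q2 : S × A → ℝ) (y : S × A × S),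
      pspan (fun sa => Gop (A := A) R Q1 y sa - Gop (A := A) R Q2 y sa)
        ≤ 2 * pspan (fun sa => Q1 sa - Q2 sa)) ∧
    ((∀ sa, |R sa| ≤ 1) → ∀ y : S × A × S,
      pspan (Gop (A := A) R (0 : S × A → ℝ) y) ≤ 1 / 2) := by
  constructor
  · intro Q1 Q2 y
    set D : S × A → ℝ := fun sa => Q1 sa - Q2 sa with hD
    set m : ℝ := ⨅ sa, D sa with hm
    set M : ℝ := ⨆ sa, D sa with hM
    have hbA : BddAbove (Set.range D) := Set.Finite.bddAbove (Set.finite_range D)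
    have hbB : BddBelow (Set.range D) := Set.Finite.bddBelow (Set.finite_range D)
    have hmle : ∀ sa, m ≤ D sa := fun sa => ciInf_le hbB sa
    have hleM : ∀ sa, D sa ≤ M := fun sa => le_ciSup hbA sa
    have hmM : m ≤ M := le_trans (hmle (Classical.arbitrary _)) (hleM _)
    -- bound on the difference of sups
    have hb1 : BddAbove (Set.range fun a' : A => Q1 (y.2.2, a')) :=
      Set.Finite.bddAbove (Set.finite_range _)
    have hb2 : BddAbove (Set.range fun a' : A => Q2 (y.2.2, a')) :=
      Set.Finite.bddAbove (Set.finite_range _)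
    have hsup_ub : (⨆ a' : A, Q1 (y.2.2, a')) - (⨆ a' : A, Q2 (y.2.2, a')) ≤ M := by
      have : (⨆ a' : A, Q1 (y.2.2, a')) ≤ (⨆ a' : A, Q2 (y.2.2, a')) + M := by
        apply ciSup_le
        intro a'
        have h1 : Q2 (y.2.2, a') ≤ ⨆ a' : A, Q2 (y.2.2, a') := le_ciSup hb2 a'
        have h2 : Q1 (y.2.2, a') - Q2 (y.2.2, a') ≤ M := hleM _
        linarith
      linarith
    have hsup_lb : m ≤ (⨆ a' : A, Q1 (y.2.2, a')) - (⨆ a' : A, Q2 (y.2.2, a')) := by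
      have : (⨆ a' : A, Q2 (y.2.2, a')) ≤ (⨆ a' : A, Q1 (y.2.2, a')) - m := by
        apply ciSup_le
        intro a'
        have h1 : Q1 (y.2.2, a') ≤ ⨆ a' : A, Q1 (y.2.2, a') := le_ciSup hb1 a'
        have h2 : m ≤ Q1 (y.2.2, a') - Q2 (y.2.2, a') := hmle _
        linarith
      linarith
    have key : pspan (fun sa => Gop (A := A) R Q1 y sa - Gop (A := A) R Q2 y sa)
        ≤ (M - m) / 2 := by
      apply pspan_le_bounds
      · intro sa
        unfold Gop
        by_cases h : (y.1, y.2.1) = sa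
        · subst h
          rw [if_pos rfl, if_pos rfl]
          linarith
        · simp only [if_neg h]
          have := hmle sa
          simp only [hD] at this
          linarith
      · intro sa
        unfold Gop
        by_cases h : (y.1, y.2.1) = sa
        · subst h
          rw [if_pos rfl, if_pos rfl]
          linarith
        · simp only [if_neg h]
          have := hleM sa
          simp only [hD] at this
          linarith
    have hps : pspan D = (M - m) / 2 := rfl
    have hnonneg : 0 ≤ pspan D := by rw [hps]; linarith
    calc pspan (fun sa => Gop (A := A) R Q1 y sa - Gop (A := A) R Q2 y sa)
        ≤ (M - m) / 2 := key
      _ = pspan D := hps.symm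
      _ ≤ 2 * pspan D := by linarith
  · intro hR y
    have hsup0 : (⨆ a' : A, (0 : S × A → ℝ) (y.2.2, a')) = 0 := by
      simp [ciSup_const]
    have hform : ∀ sa, Gop (A := A) R (0 : S × A → ℝ) y sa
        = if (y.1, y.2.1) = sa then R (y.1, y.2.1) else 0 := by
      intro sa
      unfold Gop
      rw [hsup0]
      by_cases h : (y.1, y.2.1) = sa <;> simp [h]
    have hRa := hR (y.1, y.2.1)
    rw [abs_le] at hRa
    have key : pspan (Gop (A := A) R (0 : S × A → ℝ) y)
        ≤ (max (R (y.1, y.2.1)) 0 - min (R (y.1, y.2.1)) 0) / 2 := by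
      apply pspan_le_bounds
      · intro sa
        rw [hform sa]
        by_cases h : (y.1, y.2.1) = sa <;> simp [h, min_le_left, min_le_right]
      · intro sa
        rw [hform sa]
        by_cases h : (y.1, y.2.1) = sa <;> simp [h, le_max_left, le_max_right]
    have : max (R (y.1, y.2.1)) 0 - min (R (y.1, y.2.1)) 0 ≤ 1 := by
      rcases le_total (R (y.1, y.2.1)) 0 with h | h
      · rw [max_eq_right h, min_eq_left h]; linarith
      · rw [max_eq_left h, min_eq_right h]; linarith
    linarith
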